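/- Let Ψ(r,θ) be a smooth function, define u = ∂²Ψ/∂θ² + r²∂²Ψ/∂r² + r∂Ψ/∂r, and suppose Ψ satisfies Neumann conditions ∂Ψ/∂θ = ∂u/∂θ = 0 at θ = ±π/ω for all r, Ψ and its r-derivatives vanish at r = 0 and r = r_M, and ∫_Ω u dθ = 0 for all r. Then ∫₀^{r_M} ∫_{-π/ω}^{π/ω} (1/r)[u·Ψ_{θθr} + Ψ_{θθ}·(Ψ_{θθr} - Ψ_{θθ}/r)] dθ dr = -½ ∫₀^{r_M} ∫_{-π/ω}^{π/ω} (Ψ_{θr})² dθ dr, where subscripts denote partial derivatives. -/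

import Mathlib

open intervalIntegral

/-- Partial derivative in the first (r) variable. -/
noncomputable def pdR (F : ℝ → ℝ → ℝ) : ℝ → ℝ → ℝ :=
  fun r θ => deriv (fun r' => F r' θ) r

/-- Partial derivative in the second (θ) variable. -/
noncomputable def pdT (F : ℝ → ℝ → ℝ) : ℝ → ℝ → ℝ :=
  fun r θ => deriv (fun θ' => F r θ') θ


section Helpers
open intervalIntegral MeasureTheory Set

lemma hasDerivAt_pdR {F : ℝ → ℝ → ℝ}
    (hF : Differentiable ℝ (fun p : ℝ × ℝ => F p.1 p.2)) (r θ : ℝ) :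
    HasDerivAt (fun r' => F r' θ) (pdR F r θ) r := by
  have h1 : DifferentiableAt ℝ (fun r' : ℝ => ((r', θ) : ℝ × ℝ)) r :=
    (differentiable_id.prodMk (differentiable_const θ)) r
  have : DifferentiableAt ℝ (fun r' => F r' θ) r := by
    simpa [Function.comp_def] using (hF (r, θ)).comp r h1
  simpa [pdR] using this.hasDerivAt

lemma hasDerivAt_pdT {F : ℝ → ℝ → ℝ}
    (hF : Differentiable ℝ (fun p : ℝ × ℝ => F p.1 p.2)) (r θ : ℝ) :
    HasDerivAt (fun θ' => F r θ') (pdT F r θ) θ := by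
  have h1 : DifferentiableAt ℝ (fun θ' : ℝ => ((r, θ') : ℝ × ℝ)) θ :=
    ((differentiable_const r).prodMk differentiable_id) θ
  have : DifferentiableAt ℝ (fun θ' => F r θ') θ := (hF (r, θ)).comp θ h1
  simpa [pdT] using this.hasDerivAt

lemma pdR_eq_fderiv {F : ℝ → ℝ → ℝ}
    (hF : Differentiable ℝ (fun p : ℝ × ℝ => F p.1 p.2)) (r θ : ℝ) :
    pdR F r θ = fderiv ℝ (fun p : ℝ × ℝ => F p.1 p.2) (r, θ) (1, 0) := by
  have h1 : HasDerivAt (fun r' : ℝ => ((r', θ) : ℝ × ℝ)) ((1 : ℝ), (0 : ℝ)) r :=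
    (hasDerivAt_id r).prodMk (hasDerivAt_const r θ)
  have h2 := (hF (r, θ)).hasFDerivAt.comp_hasDerivAt r h1
  simpa [pdR, Function.comp_def] using h2.deriv

lemma pdT_eq_fderiv {F : ℝ → ℝ → ℝ}
    (hF : Differentiable ℝ (fun p : ℝ × ℝ => F p.1 p.2)) (r θ : ℝ) :
    pdT F r θ = fderiv ℝ (fun p : ℝ × ℝ => F p.1 p.2) (r, θ) (0, 1) := by
  have h1 : HasDerivAt (fun θ' : ℝ => ((r, θ') : ℝ × ℝ)) ((0 : ℝ), (1 : ℝ)) θ :=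
    (hasDerivAt_const θ r).prodMk (hasDerivAt_id θ)
  have h2 := (hF (r, θ)).hasFDerivAt.comp_hasDerivAt θ h1
  simpa [pdT, Function.comp_def] using h2.deriv

lemma contDiff_pdR {n : ℕ} {F : ℝ → ℝ → ℝ}
    (hF : ContDiff ℝ ((n : WithTop ℕ∞) + 1) (fun p : ℝ × ℝ => F p.1 p.2)) :
    ContDiff ℝ n (fun p : ℝ × ℝ => pdR F p.1 p.2) := by
  have hd : Differentiable ℝ (fun p : ℝ × ℝ => F p.1 p.2) :=
    hF.differentiable (by simp)
  have : (fun p : ℝ × ℝ => pdR F p.1 p.2)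
      = fun p : ℝ × ℝ => fderiv ℝ (fun q : ℝ × ℝ => F q.1 q.2) p ((1 : ℝ), (0 : ℝ)) := by
    funext p
    exact pdR_eq_fderiv hd p.1 p.2
  rw [this]
  exact (ContinuousLinearMap.apply ℝ ℝ ((1 : ℝ), (0 : ℝ))).contDiff.comp
    (hF.fderiv_right le_rfl)

lemma contDiff_pdT {n : ℕ} {F : ℝ → ℝ → ℝ}
    (hF : ContDiff ℝ ((n : WithTop ℕ∞) + 1) (fun p : ℝ × ℝ => F p.1 p.2)) :
    ContDiff ℝ n (fun p : ℝ × ℝ => pdT F p.1 p.2) := by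
  have hd : Differentiable ℝ (fun p : ℝ × ℝ => F p.1 p.2) :=
    hF.differentiable (by simp)
  have : (fun p : ℝ × ℝ => pdT F p.1 p.2)
      = fun p : ℝ × ℝ => fderiv ℝ (fun q : ℝ × ℝ => F q.1 q.2) p ((0 : ℝ), (1 : ℝ)) := by
    funext p
    exact pdT_eq_fderiv hd p.1 p.2
  rw [this]
  exact (ContinuousLinearMap.apply ℝ ℝ ((0 : ℝ), (1 : ℝ))).contDiff.comp
    (hF.fderiv_right le_rfl)

lemma pdR_pdT_swap {F : ℝ → ℝ → ℝ}
    (hF : ContDiff ℝ 2 (fun p : ℝ × ℝ => F p.1 p.2)) (r θ : ℝ) :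
    pdR (pdT F) r θ = pdT (pdR F) r θ := by
  set f := fun p : ℝ × ℝ => F p.1 p.2 with hf
  have hd : Differentiable ℝ f := hF.differentiable two_ne_zero
  have hd' : Differentiable ℝ (fderiv ℝ f) :=
    (hF.fderiv_right (m := 1) (by norm_num)).differentiable one_ne_zero
  -- pdR (pdT F) r θ = fderiv (fderiv f) (r,θ) (1,0) (0,1)
  have e1 : pdR (pdT F) r θ = fderiv ℝ (fderiv ℝ f) (r, θ) (1, 0) (0, 1) := by
    have h1 : HasDerivAt (fun r' : ℝ => ((r', θ) : ℝ × ℝ)) ((1 : ℝ), (0 : ℝ)) r :=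
      (hasDerivAt_id r).prodMk (hasDerivAt_const r θ)
    have h2 : HasDerivAt (fun r' : ℝ => fderiv ℝ f (r', θ))
        (fderiv ℝ (fderiv ℝ f) (r, θ) (1, 0)) r :=
      (hd' (r, θ)).hasFDerivAt.comp_hasDerivAt r h1
    have h3 : HasDerivAt (fun r' : ℝ => fderiv ℝ f (r', θ) (0, 1))
        (fderiv ℝ (fderiv ℝ f) (r, θ) (1, 0) (0, 1)) r := by
      simpa using h2.clm_apply (hasDerivAt_const r ((0 : ℝ), (1 : ℝ)))
    have e2 : (fun r' : ℝ => pdT F r' θ) = fun r' : ℝ => fderiv ℝ f (r', θ) (0, 1) := by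
      funext r'
      exact pdT_eq_fderiv hd r' θ
    rw [pdR, e2]
    exact h3.deriv
  have e2 : pdT (pdR F) r θ = fderiv ℝ (fderiv ℝ f) (r, θ) (0, 1) (1, 0) := by
    have h1 : HasDerivAt (fun θ' : ℝ => ((r, θ') : ℝ × ℝ)) ((0 : ℝ), (1 : ℝ)) θ :=
      (hasDerivAt_const θ r).prodMk (hasDerivAt_id θ)
    have h2 : HasDerivAt (fun θ' : ℝ => fderiv ℝ f (r, θ'))
        (fderiv ℝ (fderiv ℝ f) (r, θ) (0, 1)) θ :=
      (hd' (r, θ)).hasFDerivAt.comp_hasDerivAt θ h1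
    have h3 : HasDerivAt (fun θ' : ℝ => fderiv ℝ f (r, θ') (1, 0))
        (fderiv ℝ (fderiv ℝ f) (r, θ) (0, 1) (1, 0)) θ := by
      simpa using h2.clm_apply (hasDerivAt_const θ ((1 : ℝ), (0 : ℝ)))
    have e3 : (fun θ' : ℝ => pdR F r θ') = fun θ' : ℝ => fderiv ℝ f (r, θ') (1, 0) := by
      funext θ'
      exact pdR_eq_fderiv hd r θ'
    rw [pdT, e3]
    exact h3.deriv
  rw [e1, e2]
  exact (hF.contDiffAt.isSymmSndFDerivAt (by norm_num)).eq _ _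

lemma hasDerivAt_param {F F' : ℝ → ℝ → ℝ}
    (hF : Continuous fun p : ℝ × ℝ => F p.1 p.2)
    (hF' : Continuous fun p : ℝ × ℝ => F' p.1 p.2)
    (hd : ∀ r θ, HasDerivAt (fun r' => F r' θ) (F' r θ) r) (a b r₀ : ℝ) :
    HasDerivAt (fun r => ∫ θ in a..b, F r θ) (∫ θ in a..b, F' r₀ θ) r₀ := by
  obtain ⟨C, hC⟩ := ((isCompact_Icc (a := r₀ - 1) (b := r₀ + 1)).prod
    (isCompact_uIcc (a := a) (b := b))).exists_bound_of_continuousOn hF'.continuousOn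
  have key := intervalIntegral.hasDerivAt_integral_of_dominated_loc_of_deriv_le
    (F := F) (F' := F') (bound := fun _ => C) (μ := volume) (a := a) (b := b) (x₀ := r₀)
    (Metric.ball_mem_nhds r₀ zero_lt_one) ?_ ?_ ?_ ?_ ?_ ?_
  · exact key.2
  · filter_upwards with x
    exact ((hF.comp (continuous_const.prodMk continuous_id)).aestronglyMeasurable :
      AEStronglyMeasurable (fun θ => F x θ) _)
  · exact (hF.comp (continuous_const.prodMk continuous_id) :
      Continuous fun θ => F r₀ θ).intervalIntegrable a b
  · exact (hF'.comp (continuous_const.prodMk continuous_id)).aestronglyMeasurable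
  · refine ae_of_all _ fun t ht x hx => ?_
    refine hC (x, t) ⟨?_, uIoc_subset_uIcc ht⟩
    have := mem_ball_iff_norm.1 hx
    have h2 : |x - r₀| < 1 := by simpa [Real.norm_eq_abs] using this
    have := abs_lt.1 h2
    constructor <;> linarith [this.1, this.2]
  · exact intervalIntegrable_const
  · exact ae_of_all _ fun t _ x _ => hd x t

set_option maxHeartbeats 1000000 in
lemma aux {a b rM : ℝ} (hab : a < b) (hrM : 0 < rM)
    {u v v1 w w1 A B : ℝ → ℝ → ℝ}
    (hvC : Continuous fun p : ℝ × ℝ => v p.1 p.2)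
    (hv1C : Continuous fun p : ℝ × ℝ => v1 p.1 p.2)
    (hwC : Continuous fun p : ℝ × ℝ => w p.1 p.2)
    (hw1C : Continuous fun p : ℝ × ℝ => w1 p.1 p.2)
    (hAC : Continuous fun p : ℝ × ℝ => A p.1 p.2)
    (hBC : Continuous fun p : ℝ × ℝ => B p.1 p.2)
    (hu : ∀ r θ, u r θ = v r θ + r ^ 2 * A r θ + r * B r θ)
    (hdv : ∀ r θ, HasDerivAt (fun r' => v r' θ) (v1 r θ) r)
    (hdw : ∀ r θ, HasDerivAt (fun r' => w r' θ) (w1 r θ) r)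
    (hdTw : ∀ r θ, HasDerivAt (fun θ' => w r θ') (v1 r θ) θ)
    (hdTA : ∀ r θ, HasDerivAt (fun θ' => A r θ') (w1 r θ) θ)
    (hdTB : ∀ r θ, HasDerivAt (fun θ' => B r θ') (w r θ) θ)
    (hv0 : ∀ θ, v 0 θ = 0) (hvM : ∀ θ, v rM θ = 0) (hwM : ∀ θ, w rM θ = 0)
    (hwa : ∀ r, w r a = 0) (hwb : ∀ r, w r b = 0) :
    (∫ r in (0:ℝ)..rM, ∫ θ in a..b,
        (1 / r) * (u r θ * v1 r θ + v r θ * (v1 r θ - v r θ / r)))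
      = -(1 / 2) * ∫ r in (0:ℝ)..rM, ∫ θ in a..b, (w r θ) ^ 2 := by
  have cur : ∀ {G : ℝ → ℝ → ℝ}, (Continuous fun p : ℝ × ℝ => G p.1 p.2) →
      ∀ r : ℝ, Continuous fun θ => G r θ := fun hG r =>
    hG.comp (continuous_const.prodMk continuous_id)
  set R : ℝ → ℝ := fun r => ∫ θ in a..b, (v r θ) ^ 2 with hRdef
  set dR : ℝ → ℝ := fun r => ∫ θ in a..b, 2 * v r θ * v1 r θ with hdRdef
  set Q : ℝ → ℝ := fun r => ∫ θ in a..b, (w r θ) ^ 2 with hQdef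
  set dQ : ℝ → ℝ := fun r => ∫ θ in a..b, 2 * w r θ * w1 r θ with hdQdef
  have hR' : ∀ r, HasDerivAt R (dR r) r := fun r =>
    hasDerivAt_param (F := fun r θ => (v r θ) ^ 2)
      (F' := fun r θ => 2 * v r θ * v1 r θ) (hvC.pow 2)
      ((continuous_const.mul hvC).mul hv1C)
      (fun r θ => by simpa using (hdv r θ).fun_pow 2) a b r
  have hQ' : ∀ r, HasDerivAt Q (dQ r) r := fun r =>
    hasDerivAt_param (F := fun r θ => (w r θ) ^ 2)
      (F' := fun r θ => 2 * w r θ * w1 r θ) (hwC.pow 2)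
      ((continuous_const.mul hwC).mul hw1C)
      (fun r θ => by simpa using (hdw r θ).fun_pow 2) a b r
  have hRc : Continuous R := continuous_iff_continuousAt.2 fun r => (hR' r).continuousAt
  have hQc : Continuous Q := continuous_iff_continuousAt.2 fun r => (hQ' r).continuousAt
  have hdRc : Continuous dR := by
    rw [hdRdef]
    exact intervalIntegral.continuous_parametric_intervalIntegral_of_continuous'
      ((continuous_const.mul hvC).mul hv1C) a b
  have hdQc : Continuous dQ := by
    rw [hdQdef]
    exact intervalIntegral.continuous_parametric_intervalIntegral_of_continuous'
      ((continuous_const.mul hwC).mul hw1C) a b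
  have R0 : R 0 = 0 := by rw [hRdef]; simp [hv0]
  have RM : R rM = 0 := by rw [hRdef]; simp [hvM]
  have QM : Q rM = 0 := by rw [hQdef]; simp [hwM]
  have dR0 : dR 0 = 0 := by rw [hdRdef]; simp [hv0]
  set D : ℝ → ℝ := fun r => R r / r - r / 2 * Q r with hDdef
  set g : ℝ → ℝ := fun r => dR r / r - R r / r ^ 2 - Q r / 2 - r / 2 * dQ r with hgdef
  have hDg : ∀ r : ℝ, r ≠ 0 → HasDerivAt D (g r) r := by
    intro r hr
    have h1 : HasDerivAt (fun r => R r / r) ((dR r * r - R r * 1) / r ^ 2) r :=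
      (hR' r).div (hasDerivAt_id r) hr
    have h2 : HasDerivAt (fun r => r / 2 * Q r) (1 / 2 * Q r + r / 2 * dQ r) r := by
      simpa using ((hasDerivAt_id r).div_const 2).fun_mul (hQ' r)
    have h3 := h1.fun_sub h2
    rw [hDdef, hgdef]
    refine h3.congr_deriv ?_
    show _ = dR r / r - R r / r ^ 2 - Q r / 2 - r / 2 * dQ r
    field_simp
    ring
  have h0 : Filter.Tendsto D (nhdsWithin 0 (Ioi 0)) (nhds 0) := by
    have hs := hR' 0
    rw [hasDerivAt_iff_tendsto_slope] at hs
    have h2 : Filter.Tendsto (slope R 0) (nhdsWithin 0 (Ioi 0)) (nhds (dR 0)) :=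
      hs.mono_left (nhdsWithin_mono _ fun x hx => ne_of_gt hx)
    rw [dR0] at h2
    have h3 : Filter.Tendsto (fun r => R r / r) (nhdsWithin 0 (Ioi 0)) (nhds 0) := by
      refine h2.congr fun x => ?_
      simp [slope_def_field, R0]
    have h4 : Filter.Tendsto (fun r => r / 2 * Q r) (nhdsWithin 0 (Ioi 0)) (nhds 0) := by
      have := ((continuous_id.div_const 2).fun_mul hQc).tendsto 0
      simpa using this.mono_left nhdsWithin_le_nhds
    rw [hDdef]
    simpa using h3.sub h4
  have hMlim : Filter.Tendsto D (nhdsWithin rM (Iio rM)) (nhds 0) := by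
    have hcont : ContinuousAt D rM := by
      rw [hDdef]
      exact (hRc.continuousAt.div continuousAt_id (ne_of_gt hrM)).sub
        ((continuousAt_id.div_const 2).mul hQc.continuousAt)
    have h5 := hcont.tendsto.mono_left (nhdsWithin_le_nhds (s := Iio rM))
    have hval : D rM = 0 := by rw [hDdef]; simp [RM, QM]
    rwa [hval] at h5
  obtain ⟨C, hC⟩ := ((isCompact_Icc (a := (0:ℝ)) (b := rM)).prod
    (isCompact_uIcc (a := a) (b := b))).exists_bound_of_continuousOn hv1C.continuousOn
  have hC0 : (0:ℝ) ≤ C := le_trans (norm_nonneg _)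
    (hC (0, a) ⟨⟨le_refl 0, hrM.le⟩, left_mem_uIcc⟩)
  have hvlin : ∀ r ∈ Icc (0:ℝ) rM, ∀ θ ∈ uIcc a b, |v r θ| ≤ C * r := by
    intro r hr θ hθ
    have h6 := (convex_Icc (0:ℝ) rM).norm_image_sub_le_of_norm_hasDerivWithin_le
      (f := fun r' => v r' θ) (f' := fun r' => v1 r' θ)
      (fun x hx => (hdv x θ).hasDerivWithinAt) (fun x hx => hC (x, θ) ⟨hx, hθ⟩)
      ⟨le_refl 0, hrM.le⟩ hr
    simpa [hv0 θ, Real.norm_eq_abs, abs_of_nonneg hr.1] using h6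
  set M : ℝ := 3 * C ^ 2 * |b - a| with hMdef
  have hRb : ∀ r ∈ Ioc (0:ℝ) rM, |R r| ≤ C ^ 2 * r ^ 2 * |b - a| := by
    intro r hr
    rw [hRdef]
    have h7 : ∀ θ ∈ uIoc a b, ‖(v r θ) ^ 2‖ ≤ C ^ 2 * r ^ 2 := by
      intro θ hθ
      have h1 := hvlin r ⟨hr.1.le, hr.2⟩ θ (uIoc_subset_uIcc hθ)
      have h2 : ‖(v r θ) ^ 2‖ = |v r θ| ^ 2 := by
        rw [Real.norm_eq_abs, abs_pow]
      rw [h2]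
      calc |v r θ| ^ 2 ≤ (C * r) ^ 2 := by
            apply pow_le_pow_left₀ (abs_nonneg _) h1
        _ = C ^ 2 * r ^ 2 := by ring
    simpa [Real.norm_eq_abs] using
      intervalIntegral.norm_integral_le_of_norm_le_const h7
  have hdRb : ∀ r ∈ Ioc (0:ℝ) rM, |dR r| ≤ 2 * C ^ 2 * r * |b - a| := by
    intro r hr
    rw [hdRdef]
    have h7 : ∀ θ ∈ uIoc a b, ‖2 * v r θ * v1 r θ‖ ≤ 2 * C ^ 2 * r := by
      intro θ hθ
      have h1 := hvlin r ⟨hr.1.le, hr.2⟩ θ (uIoc_subset_uIcc hθ)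
      have h2 : ‖v1 r θ‖ ≤ C := hC (r, θ) ⟨⟨hr.1.le, hr.2⟩, uIoc_subset_uIcc hθ⟩
      rw [Real.norm_eq_abs] at h2 ⊢
      rw [abs_mul, abs_mul, abs_two]
      have hv1nn := abs_nonneg (v1 r θ)
      have hvnn := abs_nonneg (v r θ)
      nlinarith
    simpa [Real.norm_eq_abs] using
      intervalIntegral.norm_integral_le_of_norm_le_const h7
  have hg1i : IntervalIntegrable (fun r => dR r / r - R r / r ^ 2) volume 0 rM := by
    refine IntervalIntegrable.mono_fun' (g := fun _ => M) intervalIntegrable_const ?_ ?_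
    · exact ((hdRc.measurable.div measurable_id).sub
        (hRc.measurable.div (measurable_id.pow_const 2))).aestronglyMeasurable
    · rw [Filter.EventuallyLE, ae_restrict_iff' measurableSet_uIoc]
      refine ae_of_all _ fun r hr => ?_
      rw [uIoc_of_le hrM.le] at hr
      have hrpos := hr.1
      have e1 : |dR r / r| ≤ 2 * C ^ 2 * |b - a| := by
        rw [abs_div, abs_of_pos hrpos, div_le_iff₀ hrpos]
        nlinarith [hdRb r hr]
      have e2 : |R r / r ^ 2| ≤ C ^ 2 * |b - a| := by
        rw [abs_div, abs_of_pos (pow_pos hrpos 2), div_le_iff₀ (pow_pos hrpos 2)]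
        nlinarith [hRb r hr]
      have e3 : |dR r / r - R r / r ^ 2| ≤ |dR r / r| + |R r / r ^ 2| := by
        have := abs_add_le (dR r / r) (-(R r / r ^ 2))
        simpa [sub_eq_add_neg] using this
      have : |dR r / r - R r / r ^ 2| ≤ M := by
        rw [hMdef]; nlinarith
      simpa [Real.norm_eq_abs] using this
  have hgi : IntervalIntegrable g volume 0 rM := by
    have e : g = fun r => (dR r / r - R r / r ^ 2) + (-(Q r / 2) - r / 2 * dQ r) := by
      rw [hgdef]; funext r; ring
    rw [e]
    exact hg1i.add (((hQc.div_const 2).neg.sub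
      ((continuous_id.div_const 2).mul hdQc)).intervalIntegrable _ _)
  have hFTC : (∫ r in (0:ℝ)..rM, g r) = 0 - 0 :=
    integral_eq_sub_of_hasDerivAt_of_tendsto hrM
      (fun x hx => hDg x (ne_of_gt hx.1)) hgi h0 hMlim
  have key : ∀ r : ℝ, r ≠ 0 →
      (∫ θ in a..b, (1 / r) * (u r θ * v1 r θ + v r θ * (v1 r θ - v r θ / r)))
        = g r - Q r / 2 := by
    intro r hr
    have cv := cur hvC r
    have cv1 := cur hv1C r
    have cw := cur hwC r
    have cw1 := cur hw1C r
    have cA := cur hAC r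
    have cB := cur hBC r
    have i1 : IntervalIntegrable (fun θ => 1 / r * (2 * v r θ * v1 r θ)) volume a b :=
      (continuous_const.mul ((continuous_const.mul cv).mul cv1)).intervalIntegrable _ _
    have i2 : IntervalIntegrable (fun θ => 1 / r ^ 2 * (v r θ) ^ 2) volume a b :=
      (continuous_const.mul (cv.pow 2)).intervalIntegrable _ _
    have i3 : IntervalIntegrable (fun θ => (r * A r θ + B r θ) * v1 r θ) volume a b :=
      (((continuous_const.mul cA).add cB).mul cv1).intervalIntegrable _ _
    rw [intervalIntegral.integral_congr (g := fun θ =>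
        1 / r * (2 * v r θ * v1 r θ) - 1 / r ^ 2 * (v r θ) ^ 2
          + (r * A r θ + B r θ) * v1 r θ)
      (fun θ _ => by rw [hu r θ]; field_simp; ring)]
    rw [intervalIntegral.integral_add (i1.sub i2) i3,
      intervalIntegral.integral_sub i1 i2,
      intervalIntegral.integral_const_mul, intervalIntegral.integral_const_mul]
    have ibp : (∫ θ in a..b, (r * A r θ + B r θ) * v1 r θ)
        = -∫ θ in a..b, (r * w1 r θ + w r θ) * w r θ := by
      have h := intervalIntegral.integral_mul_deriv_eq_deriv_mul
        (a := a) (b := b)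
        (u := fun θ => r * A r θ + B r θ) (u' := fun θ => r * w1 r θ + w r θ)
        (v := fun θ => w r θ) (v' := fun θ => v1 r θ)
        (fun θ _ => ((hdTA r θ).const_mul r).add (hdTB r θ))
        (fun θ _ => hdTw r θ)
        (((continuous_const.mul cw1).add cw).intervalIntegrable a b)
        (cv1.intervalIntegrable a b)
      simpa [hwa r, hwb r] using h
    rw [ibp]
    have e3 : (∫ θ in a..b, (r * w1 r θ + w r θ) * w r θ) = r / 2 * dQ r + Q r := by
      rw [show (fun θ => (r * w1 r θ + w r θ) * w r θ)
          = fun θ => r / 2 * (2 * w r θ * w1 r θ) + (w r θ) ^ 2 from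
        funext fun θ => by ring]
      rw [intervalIntegral.integral_add
        ((continuous_const.fun_mul ((continuous_const.fun_mul cw).fun_mul cw1)).intervalIntegrable _ _)
        ((cw.fun_pow 2).intervalIntegrable _ _),
        intervalIntegral.integral_const_mul]
    rw [e3]
    have edR : (∫ θ in a..b, 2 * v r θ * v1 r θ) = dR r := by rw [hdRdef]
    have eR : (∫ θ in a..b, (v r θ) ^ 2) = R r := by rw [hRdef]
    rw [edR, eR]
    simp only [hgdef]
    field_simp
    ring
  have LHS : (∫ r in (0:ℝ)..rM, ∫ θ in a..b,
      (1 / r) * (u r θ * v1 r θ + v r θ * (v1 r θ - v r θ / r)))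
      = ∫ r in (0:ℝ)..rM, (g r - Q r / 2) := by
    refine intervalIntegral.integral_congr_ae (ae_of_all _ fun x hx => ?_)
    rw [uIoc_of_le hrM.le] at hx
    exact key x (ne_of_gt hx.1)
  rw [LHS, intervalIntegral.integral_sub hgi
    ((hQc.div_const 2).intervalIntegrable _ _), hFTC,
    intervalIntegral.integral_div]
  ring

end Helpers

open MeasureTheory Set in
/-- The 2D integral identity (11.5)-(11.6): under Neumann conditions in θ, vanishing of Ψ and
its radial derivative at r = 0 and r = r_M, and zero angular average of u, the double integral
of (1/r)[u Ψ_θθr + Ψ_θθ(Ψ_θθr - Ψ_θθ/r)] equals -½ ∬ (Ψ_θr)². -/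
theorem stmt_17 (ω rM : ℝ) (hω : 0 < ω) (hrM : 0 < rM)
    (Ψ : ℝ → ℝ → ℝ) (hΨ : ContDiff ℝ 4 (fun p : ℝ × ℝ => Ψ p.1 p.2))
    (u : ℝ → ℝ → ℝ)
    (hu : u = fun r θ => pdT (pdT Ψ) r θ + r ^ 2 * pdR (pdR Ψ) r θ + r * pdR Ψ r θ)
    (hNeuΨ : ∀ r : ℝ, pdT Ψ r (-(Real.pi / ω)) = 0 ∧ pdT Ψ r (Real.pi / ω) = 0)
    (hNeuu : ∀ r : ℝ, pdT u r (-(Real.pi / ω)) = 0 ∧ pdT u r (Real.pi / ω) = 0)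
    (hr0 : ∀ θ : ℝ, Ψ 0 θ = 0 ∧ pdR Ψ 0 θ = 0)
    (hrM' : ∀ θ : ℝ, Ψ rM θ = 0 ∧ pdR Ψ rM θ = 0)
    (havg : ∀ r : ℝ, (∫ θ in (-(Real.pi / ω))..(Real.pi / ω), u r θ) = 0) :
    (∫ r in (0 : ℝ)..rM, ∫ θ in (-(Real.pi / ω))..(Real.pi / ω),
        (1 / r) * (u r θ * pdR (pdT (pdT Ψ)) r θ
          + pdT (pdT Ψ) r θ * (pdR (pdT (pdT Ψ)) r θ - pdT (pdT Ψ) r θ / r)))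
      = -(1 / 2) * ∫ r in (0 : ℝ)..rM, ∫ θ in (-(Real.pi / ω))..(Real.pi / ω),
          (pdR (pdT Ψ) r θ) ^ 2 := by
  have hb : 0 < Real.pi / ω := div_pos Real.pi_pos hω
  have hab : -(Real.pi / ω) < Real.pi / ω := by linarith
  -- smoothness chain
  have hT3 : ContDiff ℝ ((3 : ℕ) : WithTop ℕ∞) (fun p : ℝ × ℝ => pdT Ψ p.1 p.2) :=
    contDiff_pdT (n := 3) (hΨ.of_le (by norm_num))
  have hB3 : ContDiff ℝ ((3 : ℕ) : WithTop ℕ∞) (fun p : ℝ × ℝ => pdR Ψ p.1 p.2) :=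
    contDiff_pdR (n := 3) (hΨ.of_le (by norm_num))
  have hv2 : ContDiff ℝ ((2 : ℕ) : WithTop ℕ∞) (fun p : ℝ × ℝ => pdT (pdT Ψ) p.1 p.2) :=
    contDiff_pdT (n := 2) (hT3.of_le (by norm_num))
  have hw2 : ContDiff ℝ ((2 : ℕ) : WithTop ℕ∞) (fun p : ℝ × ℝ => pdR (pdT Ψ) p.1 p.2) :=
    contDiff_pdR (n := 2) (hT3.of_le (by norm_num))
  have hA2 : ContDiff ℝ ((2 : ℕ) : WithTop ℕ∞) (fun p : ℝ × ℝ => pdR (pdR Ψ) p.1 p.2) :=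
    contDiff_pdR (n := 2) (hB3.of_le (by norm_num))
  have hv1 : ContDiff ℝ ((1 : ℕ) : WithTop ℕ∞) (fun p : ℝ × ℝ => pdR (pdT (pdT Ψ)) p.1 p.2) :=
    contDiff_pdR (n := 1) (hv2.of_le (by norm_num))
  have hw1 : ContDiff ℝ ((1 : ℕ) : WithTop ℕ∞) (fun p : ℝ × ℝ => pdR (pdR (pdT Ψ)) p.1 p.2) :=
    contDiff_pdR (n := 1) (hw2.of_le (by norm_num))
  -- Clairaut swaps
  have swap1 : ∀ r θ, pdR (pdT Ψ) r θ = pdT (pdR Ψ) r θ :=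
    pdR_pdT_swap (hΨ.of_le (by norm_num))
  have swap2 : ∀ r θ, pdR (pdT (pdT Ψ)) r θ = pdT (pdR (pdT Ψ)) r θ :=
    pdR_pdT_swap (hT3.of_le (by norm_num))
  have swapB : ∀ r θ, pdR (pdT (pdR Ψ)) r θ = pdT (pdR (pdR Ψ)) r θ :=
    pdR_pdT_swap (hB3.of_le (by norm_num))
  have efun : pdT (pdR Ψ) = pdR (pdT Ψ) :=
    funext fun r => funext fun θ => (swap1 r θ).symm
  have swap3 : ∀ r θ, pdT (pdR (pdR Ψ)) r θ = pdR (pdR (pdT Ψ)) r θ := by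
    intro r θ
    rw [← swapB r θ, ← efun]
  -- derivatives in r
  have hdv : ∀ r θ, HasDerivAt (fun r' => pdT (pdT Ψ) r' θ) (pdR (pdT (pdT Ψ)) r θ) r :=
    hasDerivAt_pdR (hv2.differentiable (by norm_num))
  have hdw : ∀ r θ, HasDerivAt (fun r' => pdR (pdT Ψ) r' θ) (pdR (pdR (pdT Ψ)) r θ) r :=
    hasDerivAt_pdR (hw2.differentiable (by norm_num))
  -- derivatives in θ
  have hdTw : ∀ r θ, HasDerivAt (fun θ' => pdR (pdT Ψ) r θ') (pdR (pdT (pdT Ψ)) r θ) θ := by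
    intro r θ
    have h := hasDerivAt_pdT (hw2.differentiable (by norm_num)) r θ
    rwa [← swap2 r θ] at h
  have hdTA : ∀ r θ, HasDerivAt (fun θ' => pdR (pdR Ψ) r θ') (pdR (pdR (pdT Ψ)) r θ) θ := by
    intro r θ
    have h := hasDerivAt_pdT (hA2.differentiable (by norm_num)) r θ
    rwa [swap3 r θ] at h
  have hdTB : ∀ r θ, HasDerivAt (fun θ' => pdR Ψ r θ') (pdR (pdT Ψ) r θ) θ := by
    intro r θ
    have h := hasDerivAt_pdT (hB3.differentiable (by norm_num)) r θ
    rwa [← swap1 r θ] at h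
  -- boundary values
  have hT0 : ∀ θ, pdT Ψ 0 θ = 0 := by
    intro θ
    have e : (fun θ' => Ψ 0 θ') = fun _ => (0:ℝ) := funext fun t => (hr0 t).1
    simp only [pdT]
    rw [e]
    exact deriv_const _ _
  have hTM : ∀ θ, pdT Ψ rM θ = 0 := by
    intro θ
    have e : (fun θ' => Ψ rM θ') = fun _ => (0:ℝ) := funext fun t => (hrM' t).1
    simp only [pdT]
    rw [e]
    exact deriv_const _ _
  have hv0 : ∀ θ, pdT (pdT Ψ) 0 θ = 0 := by
    intro θ
    have e : (fun θ' => pdT Ψ 0 θ') = fun _ => (0:ℝ) := funext fun t => hT0 t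
    show deriv (fun θ' => pdT Ψ 0 θ') θ = 0
    rw [e]
    exact deriv_const _ _
  have hvM : ∀ θ, pdT (pdT Ψ) rM θ = 0 := by
    intro θ
    have e : (fun θ' => pdT Ψ rM θ') = fun _ => (0:ℝ) := funext fun t => hTM t
    show deriv (fun θ' => pdT Ψ rM θ') θ = 0
    rw [e]
    exact deriv_const _ _
  have hwM : ∀ θ, pdR (pdT Ψ) rM θ = 0 := by
    intro θ
    rw [swap1]
    have e : (fun θ' => pdR Ψ rM θ') = fun _ => (0:ℝ) := funext fun t => (hrM' t).2
    simp only [pdT]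
    rw [e]
    exact deriv_const _ _
  have hwa : ∀ r, pdR (pdT Ψ) r (-(Real.pi / ω)) = 0 := by
    intro r
    have e : (fun r' => pdT Ψ r' (-(Real.pi / ω))) = fun _ => (0:ℝ) :=
      funext fun t => (hNeuΨ t).1
    simp only [pdR]
    rw [e]
    exact deriv_const _ _
  have hwb : ∀ r, pdR (pdT Ψ) r (Real.pi / ω) = 0 := by
    intro r
    have e : (fun r' => pdT Ψ r' (Real.pi / ω)) = fun _ => (0:ℝ) :=
      funext fun t => (hNeuΨ t).2
    simp only [pdR]
    rw [e]
    exact deriv_const _ _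
  exact aux hab hrM hv2.continuous hv1.continuous hw2.continuous hw1.continuous
    hA2.continuous hB3.continuous (fun r θ => by rw [hu]) hdv hdw hdTw hdTA hdTB
    hv0 hvM hwM hwa hwb
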